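/- arXiv:1909.05376 — 7 statements merged into one kernel-verified Lean document; each statement's English description precedes it below -/
import Mathlib

section
/- Let K ⊆ L1 ⊆ L2 and K ⊆ L3 be Galois extensions of a field K (inside a fixed algebraic closure). Then the compositum L1(L2 ∩ L3) equals the intersection L2 ∩ (L1·L3). -/
open IntermediateField

/-- Dedekind modular law for subgroups with one normal factor. -/
lemma dedekind_mod {G : Type*} [Group G] (H1 H2 H3 : Subgroup G) [H2.Normal] (h : H2 ≤ H1) :
    H1 ⊓ (H2 ⊔ H3) ≤ H2 ⊔ (H1 ⊓ H3) := by
  rintro g ⟨hg1, hg23⟩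
  have hg : g ∈ (↑(H2 ⊔ H3) : Set G) := hg23
  rw [Subgroup.normal_mul] at hg
  obtain ⟨a, ha, b, hb, rfl⟩ := hg
  have hb1 : b ∈ H1 := by
    have := H1.mul_mem (H1.inv_mem (h ha)) hg1
    simpa [mul_assoc] using this
  exact Subgroup.mul_mem _ (Subgroup.mem_sup_left ha)
    (Subgroup.mem_sup_right ⟨hb1, hb⟩)

/-- The modular identity for intermediate fields of a finite Galois extension. -/
lemma finite_modular {K N : Type*} [Field K] [Field N] [Algebra K N]
    [FiniteDimensional K N] [IsGalois K N]
    (E1 E2 E3 : IntermediateField K N) [IsGalois K E2]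
    (h12 : E1 ≤ E2) : E2 ⊓ (E1 ⊔ E3) ≤ E1 ⊔ (E2 ⊓ E3) := by
  rw [← (IsGalois.intermediateFieldEquivSubgroup (F := K) (E := N)).le_iff_le,
    OrderIso.map_inf, OrderIso.map_sup, OrderIso.map_sup, OrderIso.map_inf]
  have h21 : E2.fixingSubgroup ≤ E1.fixingSubgroup :=
    IntermediateField.fixingSubgroup_le h12
  exact dedekind_mod E1.fixingSubgroup E2.fixingSubgroup E3.fixingSubgroup h21

/-- A finite subset of a Galois extension is contained in a finite-dimensional
Galois intermediate field. -/
lemma exists_gc' {K M : Type*} [Field K] [Field M] [Algebra K M] [IsGalois K M]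
    (S : Set M) (hfin : S.Finite) :
    ∃ B : IntermediateField K M, IsGalois K B ∧ FiniteDimensional K B ∧ S ⊆ B := by
  haveI : Finite S := hfin
  haveI : FiniteDimensional K (adjoin K S) :=
    finiteDimensional_adjoin (fun x _ => IsGalois.integral K x)
  refine ⟨normalClosure K (adjoin K S) M, IsGalois.normalClosure K _ _,
    normalClosure.is_finiteDimensional K _ _, ?_⟩
  exact fun s hs => le_normalClosure _ (subset_adjoin K S hs)

/-- Any finite subset of a Galois intermediate field is contained in a
finite-dimensional Galois intermediate subfield. -/
lemma exists_gc {K Ω : Type*} [Field K] [Field Ω] [Algebra K Ω]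
    (L : IntermediateField K Ω) [IsGalois K L] (S : Set Ω) (hfin : S.Finite) (hS : S ⊆ L) :
    ∃ A : IntermediateField K Ω, IsGalois K A ∧ FiniteDimensional K A ∧ A ≤ L ∧ S ⊆ A := by
  let S' : Set ↥L := ((↑) : ↥L → Ω) ⁻¹' S
  have hfin' : S'.Finite := hfin.preimage (Subtype.val_injective.injOn)
  obtain ⟨B, hGB, hFB, hSB⟩ := exists_gc' (K := K) (M := ↥L) S' hfin'
  haveI := hGB; haveI := hFB
  have hGlift : IsGalois K ↥(lift B) := IsGalois.of_algEquiv (liftAlgEquiv B)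
  have hFlift : FiniteDimensional K ↥(lift B) :=
    Module.Finite.equiv (liftAlgEquiv B).toLinearEquiv
  refine ⟨lift B, hGlift, hFlift, lift_le B, ?_⟩
  intro s hs
  exact (mem_lift (⟨s, hS hs⟩ : ↥L)).mpr (hSB hs)

theorem stmt0 (K : Type*) [Field K]
    (L1 L2 L3 : IntermediateField K (AlgebraicClosure K))
    [IsGalois K L1] [IsGalois K L2] [IsGalois K L3]
    (h12 : L1 ≤ L2) :
    L1 ⊔ (L2 ⊓ L3) = L2 ⊓ (L1 ⊔ L3) := by
  refine le_antisymm
    (sup_le (le_inf h12 le_sup_left)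
      (le_inf inf_le_left (le_trans inf_le_right le_sup_right))) ?_
  intro x hx
  rw [mem_inf] at hx
  obtain ⟨hx2, hx13⟩ := hx
  -- write x in a finitely generated piece of L1 ⊔ L3
  have hsup : L1 ⊔ L3 ≤ adjoin K ((L1 : Set _) ∪ (L3 : Set _)) :=
    sup_le (fun y hy => subset_adjoin _ _ (Or.inl hy))
      (fun y hy => subset_adjoin _ _ (Or.inr hy))
  obtain ⟨T, hT, hxT⟩ := exists_finset_of_mem_adjoin (hsup hx13)
  set S1 : Set (AlgebraicClosure K) := ↑T ∩ L1 with hS1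
  set S3 : Set (AlgebraicClosure K) := ↑T ∩ L3 with hS3
  obtain ⟨A1, hGA1, hFA1, hA1L1, hS1A1⟩ :=
    exists_gc L1 S1 (T.finite_toSet.inter_of_left _) Set.inter_subset_right
  obtain ⟨A3, hGA3, hFA3, hA3L3, hS3A3⟩ :=
    exists_gc L3 S3 (T.finite_toSet.inter_of_left _) Set.inter_subset_right
  obtain ⟨C, hGC, hFC, hCL2, hxC⟩ :=
    exists_gc L2 {x} (Set.finite_singleton x) (by simpa using hx2)
  haveI := hGA1; haveI := hFA1; haveI := hGA3; haveI := hFA3; haveI := hGC; haveI := hFC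
  set A2 : IntermediateField K (AlgebraicClosure K) := A1 ⊔ C with hA2
  haveI : IsGalois K A2 := by infer_instance
  haveI : FiniteDimensional K A2 := by infer_instance
  have hA1A2 : A1 ≤ A2 := le_sup_left
  have hA2L2 : A2 ≤ L2 := sup_le (hA1L1.trans h12) hCL2
  have hxA2 : x ∈ A2 := (le_sup_right : C ≤ A2) (hxC rfl)
  set N : IntermediateField K (AlgebraicClosure K) := A2 ⊔ A3 with hN
  haveI : IsGalois K N := by infer_instance
  haveI : FiniteDimensional K N := by infer_instance
  have hA2N : A2 ≤ N := le_sup_left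
  have hA1N : A1 ≤ N := hA1A2.trans hA2N
  have hA3N : A3 ≤ N := le_sup_right
  have hxN : x ∈ N := hA2N hxA2
  -- transfer to intermediate fields of N
  set E1 : IntermediateField K ↥N := A1.comap N.val with hE1
  set E2 : IntermediateField K ↥N := A2.comap N.val with hE2
  set E3 : IntermediateField K ↥N := A3.comap N.val with hE3
  have hmap1 : E1.map N.val = A1 :=
    map_comap_eq_self (by rw [fieldRange_val]; exact hA1N)
  have hmap2 : E2.map N.val = A2 :=
    map_comap_eq_self (by rw [fieldRange_val]; exact hA2N)
  have hmap3 : E3.map N.val = A3 :=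
    map_comap_eq_self (by rw [fieldRange_val]; exact hA3N)
  haveI := IsGalois.of_algEquiv ((equivOfEq hmap2.symm).trans (equivMap E2 N.val).symm)
  have h12' : E1 ≤ E2 := fun y hy => hA1A2 hy
  set x' : ↥N := ⟨x, hxN⟩ with hx'
  have hxE2 : x' ∈ E2 := hxA2
  have hxA13 : x ∈ A1 ⊔ A3 := by
    refine adjoin_le_iff.mpr ?_ hxT
    intro t ht
    rcases hT ht with h1 | h3
    · exact (le_sup_left : A1 ≤ A1 ⊔ A3) (hS1A1 ⟨ht, h1⟩)
    · exact (le_sup_right : A3 ≤ A1 ⊔ A3) (hS3A3 ⟨ht, h3⟩)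
  have hxE13 : x' ∈ E1 ⊔ E3 := by
    have hle : A1 ⊔ A3 ≤ (E1 ⊔ E3).map N.val := by
      rw [IntermediateField.map_sup, hmap1, hmap3]
    obtain ⟨y, hy, hyx⟩ := hle hxA13
    have : y = x' := Subtype.ext hyx
    rwa [this] at hy
  have hfinal : x' ∈ E1 ⊔ (E2 ⊓ E3) :=
    finite_modular E1 E2 E3 h12' (mem_inf.mpr ⟨hxE2, hxE13⟩)
  have hle : (E1 ⊔ (E2 ⊓ E3)).map N.val ≤ L1 ⊔ (L2 ⊓ L3) := by
    rw [IntermediateField.map_sup]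
    refine sup_le ?_ ?_
    · rw [hmap1]; exact hA1L1.trans le_sup_left
    · rintro _ ⟨z, hz, rfl⟩
      have hz2 : z ∈ E2 ⊓ E3 := hz
      rw [mem_inf] at hz2
      refine (le_sup_right : L2 ⊓ L3 ≤ L1 ⊔ L2 ⊓ L3) (mem_inf.mpr ⟨?_, ?_⟩)
      · exact hA2L2 hz2.1
      · exact hA3L3 hz2.2
  exact hle ⟨x', hfinal, rfl⟩
end

section
/- Let 1 → A → G → Q → 1 be a short exact sequence of groups with A abelian, so that Q acts on A by conjugation. Let [A,Q] be the subgroup of A generated by elements of the form q·a − a (written additively) for a ∈ A and q ∈ Q. Then the quotient A/[A,Q] surjects onto the kernel of the induced map G^ab → Q^ab between abelianizations. -/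
theorem stmt2 (G : Type*) [Group G] (A : Subgroup G) [A.Normal]
    (hA : ∀ x ∈ A, ∀ y ∈ A, x * y = y * x) :
    ∃ φ : A →* (Abelianization.map (QuotientGroup.mk' A)).ker,
      Function.Surjective φ ∧
      (Subgroup.closure {x : G | ∃ a ∈ A, ∃ g : G, x = g * a * g⁻¹ * a⁻¹}).subgroupOf A
        ≤ φ.ker := by
  have hmem : ∀ a : A, Abelianization.of (a : G) ∈
      (Abelianization.map (QuotientGroup.mk' A)).ker := by
    intro a
    rw [MonoidHom.mem_ker, Abelianization.map_of]
    have : QuotientGroup.mk' A (a : G) = 1 := (QuotientGroup.eq_one_iff _).2 a.2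
    rw [this, map_one]
  refine ⟨MonoidHom.codRestrict (Abelianization.of.comp A.subtype) _ hmem, ?_, ?_⟩
  · rintro ⟨x, hx⟩
    obtain ⟨g, rfl⟩ := QuotientGroup.mk_surjective x
    have hx' : Abelianization.of (QuotientGroup.mk' A g) = 1 := by
      have := hx
      change Abelianization.map (QuotientGroup.mk' A) (Abelianization.of g) = 1 at this
      rwa [Abelianization.map_of] at this
    have hgc : QuotientGroup.mk' A g ∈ commutator (G ⧸ A) :=
      (QuotientGroup.eq_one_iff _).1 hx'
    have hcom : commutator (G ⧸ A) = Subgroup.map (QuotientGroup.mk' A) (commutator G) := by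
      rw [commutator_def, commutator_def, Subgroup.map_commutator,
        Subgroup.map_top_of_surjective _ (QuotientGroup.mk'_surjective A)]
    rw [hcom] at hgc
    obtain ⟨c, hc, hcg⟩ := hgc
    have haA : g * c⁻¹ ∈ A := by
      have : QuotientGroup.mk' A (g * c⁻¹) = 1 := by
        rw [map_mul, map_inv, hcg, mul_inv_cancel]
      exact (QuotientGroup.eq_one_iff _).1 this
    refine ⟨⟨g * c⁻¹, haA⟩, ?_⟩
    apply Subtype.ext
    show Abelianization.of (g * c⁻¹) = QuotientGroup.mk g
    have hc1 : Abelianization.of c = 1 := (QuotientGroup.eq_one_iff _).2 hc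
    rw [map_mul, map_inv, hc1, inv_one, mul_one]
    rfl
  · intro x hx
    have hle : Subgroup.closure {x : G | ∃ a ∈ A, ∃ g : G, x = g * a * g⁻¹ * a⁻¹}
        ≤ commutator G := by
      rw [Subgroup.closure_le]
      rintro _ ⟨a, _, g, rfl⟩
      exact Subgroup.commutator_mem_commutator (Subgroup.mem_top g) (Subgroup.mem_top a)
    have hx' : (x : G) ∈ commutator G := hle hx
    apply Subtype.ext
    show Abelianization.of (x : G) = 1
    exact (QuotientGroup.eq_one_iff _).2 hx'
end

section
/- (Sah's lemma) Let G be a group, V a G-module, and g a central element of G. Then (g − 1)·H¹(G, V) = 0; that is, for every class c ∈ H¹(G,V), the class of the cocycle x ↦ g·φ(x) − φ(x) is a coboundary, where φ represents c. -/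
theorem stmt4 (G : Type*) [Group G] (V : Type*) [AddCommGroup V]
    [DistribMulAction G V]
    (g : G) (hg : ∀ x : G, g * x = x * g)
    (φ : G → V) (hcocycle : ∀ x y : G, φ (x * y) = x • φ y + φ x) :
    ∃ v : V, ∀ x : G, g • φ x - φ x = x • v - v := by
  refine ⟨φ g, fun x => ?_⟩
  have h1 := hcocycle g x
  have h2 := hcocycle x g
  rw [hg x] at h1
  rw [h1] at h2
  linear_combination (norm := abel) h2
end

section
/- Let ℓ be a prime and H a closed subgroup of GL₂(ℤ_ℓ). Suppose the reduction of H modulo ℓ contains a scalar matrix λ̄·Id with λ̄ ∈ 𝔽_ℓ^×. Then H contains a scalar matrix λ·Id for some λ ∈ ℤ_ℓ^× with λ ≡ λ̄ (mod ℓ). -/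
open Filter Topology

section aux
variable {p : ℕ} [hp : Fact p.Prime]

private lemma entry_dvd_mul (X Y : Matrix (Fin 2) (Fin 2) ℤ_[p]) (c d : ℤ_[p])
    (hX : ∀ i j, c ∣ X i j) (hY : ∀ i j, d ∣ Y i j) : ∀ i j, c * d ∣ (X * Y) i j := by
  intro i j
  rw [Matrix.mul_apply]
  exact Finset.dvd_sum fun k _ => mul_dvd_mul (hX i k) (hY k j)

private lemma entry_dvd_pow (X : Matrix (Fin 2) (Fin 2) ℤ_[p]) (c : ℤ_[p])
    (hX : ∀ i j, c ∣ X i j) : ∀ m : ℕ, ∀ i j, c ^ (m + 1) ∣ (X ^ (m + 1)) i j := by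
  intro m
  induction m with
  | zero => simpa using hX
  | succ m ih =>
    have := entry_dvd_mul (X ^ (m + 1)) X (c ^ (m + 1)) c ih hX
    simpa [pow_succ] using this

private lemma one_add_pow_key (A : Matrix (Fin 2) (Fin 2) ℤ_[p])
    (hA : ∀ i j, (p : ℤ_[p]) ∣ A i j) (n : ℕ) :
    ∀ i j, (p : ℤ_[p]) ^ (n + 1) ∣ ((1 + A) ^ (p ^ n) - 1) i j := by
  induction n with
  | zero => simpa using hA
  | succ n ih =>
    set E : Matrix (Fin 2) (Fin 2) ℤ_[p] := (1 + A) ^ (p ^ n) - 1 with hE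
    have hXE : (1 + A) ^ (p ^ (n + 1)) = (1 + E) ^ p := by
      rw [pow_succ, pow_mul]
      congr 1
      simp [hE]
    have hexp : (1 + E) ^ p =
        ∑ m ∈ Finset.range (p + 1), 1 ^ m * E ^ (p - m) * (p.choose m : Matrix (Fin 2) (Fin 2) ℤ_[p]) :=
      Commute.add_pow (Commute.one_left E) p
    have hsplit : (1 + E) ^ p - 1 =
        ∑ m ∈ Finset.range p, 1 ^ m * E ^ (p - m) * (p.choose m : Matrix (Fin 2) (Fin 2) ℤ_[p]) := by
      rw [hexp, Finset.sum_range_succ]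
      simp
    intro i j
    rw [hXE, hsplit]
    have hterm : ∀ m ∈ Finset.range p, (p : ℤ_[p]) ^ (n + 1 + 1) ∣
        (1 ^ m * E ^ (p - m) * (p.choose m : Matrix (Fin 2) (Fin 2) ℤ_[p])) i j := by
      intro m hm
      rw [Finset.mem_range] at hm
      have hpm : p - m = (p - m - 1) + 1 := by omega
      have hEpow := entry_dvd_pow E ((p : ℤ_[p]) ^ (n + 1)) ih (p - m - 1)
      rw [← hpm] at hEpow
      rcases Nat.eq_zero_or_pos m with hm0 | hm0
      · -- m = 0 : term is E ^ p, entries divisible by p^((n+1)p)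
        subst hm0
        have h1 : ((p : ℤ_[p]) ^ (n + 1)) ^ (p - 0) ∣ (E ^ (p - 0)) i j := hEpow i j
        have h2 : (p : ℤ_[p]) ^ (n + 1 + 1) ∣ ((p : ℤ_[p]) ^ (n + 1)) ^ (p - 0) := by
          rw [← pow_mul, Nat.sub_zero]
          apply pow_dvd_pow
          have := hp.out.two_le
          nlinarith
        simpa using h2.trans h1
      · have hC : ∀ i j : Fin 2, (p : ℤ_[p]) ∣ ((p.choose m : ℕ) : Matrix (Fin 2) (Fin 2) ℤ_[p]) i j := by
          intro i j
          rw [← Matrix.diagonal_natCast, Matrix.diagonal_apply]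
          split
          · exact Nat.cast_dvd_cast (hp.out.dvd_choose_self (by omega) hm)
          · exact dvd_zero _
        have hE1 : ∀ i j : Fin 2, (p : ℤ_[p]) ^ (n + 1) ∣ (E ^ (p - m)) i j := by
          intro i j
          exact (dvd_pow_self ((p : ℤ_[p]) ^ (n + 1)) (by omega : p - m ≠ 0)).trans (hEpow i j)
        have := entry_dvd_mul (E ^ (p - m)) _ _ _ hE1 hC i j
        rw [one_pow, one_mul, pow_succ]
        exact this
    rw [Matrix.sum_apply]
    exact Finset.dvd_sum hterm



private lemma tendsto_pow_matrix (M : Matrix (Fin 2) (Fin 2) ℤ_[p]) (u : ℤ_[p]ˣ)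
    (hM : ∀ i j, (p : ℤ_[p]) ∣ (M - (u : ℤ_[p]) • 1) i j)
    (b : ℤ_[p]) (φ : ℕ → ℕ) (hφ : Tendsto φ atTop atTop)
    (hb : Tendsto (fun k => ((u : ℤ_[p])) ^ (p ^ (φ k))) atTop (𝓝 b)) :
    Tendsto (fun k => M ^ (p ^ (φ k))) atTop (𝓝 (b • (1 : Matrix (Fin 2) (Fin 2) ℤ_[p]))) := by
  set A : Matrix (Fin 2) (Fin 2) ℤ_[p] := ((u⁻¹ : ℤ_[p]ˣ) : ℤ_[p]) • (M - (u : ℤ_[p]) • 1) with hA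
  have hAdvd : ∀ i j, (p : ℤ_[p]) ∣ A i j := by
    intro i j
    rw [hA, Matrix.smul_apply, smul_eq_mul]
    exact (hM i j).mul_left _
  have hMA : M = (u : ℤ_[p]) • (1 + A) := by
    rw [hA, smul_add, smul_smul, Units.mul_inv, one_smul, add_sub_cancel]
  apply tendsto_pi_nhds.2
  intro i
  apply tendsto_pi_nhds.2
  intro j
  have hsplit : ∀ k, (M ^ (p ^ (φ k))) i j =
      ((u : ℤ_[p]) ^ (p ^ (φ k))) * (1 : Matrix (Fin 2) (Fin 2) ℤ_[p]) i j +
      ((u : ℤ_[p]) ^ (p ^ (φ k))) * (((1 + A) ^ (p ^ (φ k)) - 1) i j) := by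
    intro k
    rw [hMA, smul_pow, Matrix.smul_apply, smul_eq_mul, ← mul_add]
    congr 1
    simp [Matrix.sub_apply]
  have h1 : Tendsto (fun k => ((u : ℤ_[p]) ^ (p ^ (φ k))) * (1 : Matrix (Fin 2) (Fin 2) ℤ_[p]) i j)
      atTop (𝓝 (b * (1 : Matrix (Fin 2) (Fin 2) ℤ_[p]) i j)) := hb.mul_const _
  have h2 : Tendsto (fun k => ((u : ℤ_[p]) ^ (p ^ (φ k))) * (((1 + A) ^ (p ^ (φ k)) - 1) i j))
      atTop (𝓝 0) := by
    apply squeeze_zero_norm (a := fun k => ((p : ℝ)⁻¹) ^ (φ k + 1))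
    · intro k
      rcases one_add_pow_key A hAdvd (φ k) i j with ⟨r, hr⟩
      rw [norm_mul, hr, norm_mul, norm_pow, norm_pow, PadicInt.norm_p]
      calc ‖(u : ℤ_[p])‖ ^ p ^ φ k * (((p : ℝ)⁻¹) ^ (φ k + 1) * ‖r‖)
          ≤ 1 * (((p : ℝ)⁻¹) ^ (φ k + 1) * 1) := by
            apply mul_le_mul
            · rw [PadicInt.norm_units]; simp
            · apply mul_le_mul_of_nonneg_left (PadicInt.norm_le_one r) (by positivity)
            · positivity
            · norm_num
        _ = ((p : ℝ)⁻¹) ^ (φ k + 1) := by ring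
    · have hp1 : (1 : ℝ) < (p : ℝ) := by exact_mod_cast hp.out.one_lt
      have hlt : (p : ℝ)⁻¹ < 1 := by
        rw [inv_lt_one_iff₀]
        right
        exact hp1
      have h0 : (0 : ℝ) ≤ (p : ℝ)⁻¹ := by positivity
      have := tendsto_pow_atTop_nhds_zero_of_lt_one h0 hlt
      exact this.comp (tendsto_atTop_mono (fun k => Nat.le_add_right (φ k) 1) hφ)
  have := h1.add h2
  rw [add_zero] at this
  have heq : (fun k => (M ^ (p ^ (φ k))) i j) = fun k =>
      ((u : ℤ_[p]) ^ (p ^ (φ k))) * (1 : Matrix (Fin 2) (Fin 2) ℤ_[p]) i j +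
      ((u : ℤ_[p]) ^ (p ^ (φ k))) * (((1 + A) ^ (p ^ (φ k)) - 1) i j) := funext hsplit
  rw [heq, Matrix.smul_apply, smul_eq_mul]
  exact this

private lemma dvd_of_toZMod_eq_zero (x : ℤ_[p]) (hx : PadicInt.toZMod x = 0) :
    (p : ℤ_[p]) ∣ x := by
  have : x ∈ RingHom.ker (PadicInt.toZMod : ℤ_[p] →+* ZMod p) := hx
  rw [PadicInt.ker_toZMod, PadicInt.maximalIdeal_eq_span_p, Ideal.mem_span_singleton] at this
  exact this

private lemma toZMod_eq_zero_of_dvd (x : ℤ_[p]) (hx : (p : ℤ_[p]) ∣ x) :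
    PadicInt.toZMod x = 0 := by
  obtain ⟨y, rfl⟩ := hx
  rw [map_mul, map_natCast, ZMod.natCast_self, zero_mul]

end aux

/-- A closed subgroup of `GL₂(ℤ_ℓ)` whose reduction mod `ℓ` contains a scalar matrix
`λ̄·Id` contains a scalar matrix `λ·Id` with `λ ≡ λ̄ (mod ℓ)`. -/
theorem stmt7 (p : ℕ) [Fact p.Prime]
    (H : Subgroup (GL (Fin 2) ℤ_[p])) (hH : IsClosed (H : Set (GL (Fin 2) ℤ_[p])))
    (lbar : (ZMod p)ˣ)
    (hlbar : ∃ h ∈ H, ((h : GL (Fin 2) ℤ_[p]) : Matrix (Fin 2) (Fin 2) ℤ_[p]).map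
        (PadicInt.toZMod : ℤ_[p] →+* ZMod p) =
        ((lbar : ZMod p) • (1 : Matrix (Fin 2) (Fin 2) (ZMod p)))) :
    ∃ lam : ℤ_[p]ˣ, PadicInt.toZMod (lam : ℤ_[p]) = (lbar : ZMod p) ∧
      ∃ h ∈ H, ((h : GL (Fin 2) ℤ_[p]) : Matrix (Fin 2) (Fin 2) ℤ_[p]) =
        (lam : ℤ_[p]) • (1 : Matrix (Fin 2) (Fin 2) ℤ_[p]) := by
  obtain ⟨h, hmem, hred⟩ := hlbar
  -- a unit lift of lbar
  have hu0 : ∃ u0 : ℤ_[p]ˣ, PadicInt.toZMod (u0 : ℤ_[p]) = (lbar : ZMod p) := by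
    set c : ℤ_[p] := ((lbar : ZMod p).val : ℤ_[p]) with hc
    have hcz : PadicInt.toZMod c = (lbar : ZMod p) := by
      rw [hc, map_natCast, ZMod.natCast_val, ZMod.cast_id]
    have hunit : IsUnit c := by
      by_contra hcu
      rw [PadicInt.not_isUnit_iff, PadicInt.norm_lt_one_iff_dvd] at hcu
      have := toZMod_eq_zero_of_dvd c hcu
      rw [hcz] at this
      exact lbar.ne_zero this
    exact ⟨hunit.unit, by rw [IsUnit.unit_spec]; exact hcz⟩
  obtain ⟨u0, hu0⟩ := hu0
  -- entries of h - u0•1 are divisible by p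
  have hMdvd : ∀ i j, (p : ℤ_[p]) ∣
      (((h : GL (Fin 2) ℤ_[p]) : Matrix (Fin 2) (Fin 2) ℤ_[p]) - (u0 : ℤ_[p]) • 1) i j := by
    intro i j
    apply dvd_of_toZMod_eq_zero
    rw [Matrix.sub_apply, map_sub, Matrix.smul_apply, smul_eq_mul, map_mul, hu0]
    have hentry : PadicInt.toZMod (((h : GL (Fin 2) ℤ_[p]) : Matrix (Fin 2) (Fin 2) ℤ_[p]) i j) =
        (lbar : ZMod p) * (1 : Matrix (Fin 2) (Fin 2) (ZMod p)) i j := by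
      have := congrFun (congrFun hred i) j
      rw [Matrix.map_apply] at this
      rw [this, Matrix.smul_apply, smul_eq_mul]
    rw [hentry]
    rw [Matrix.one_apply, Matrix.one_apply]
    split <;> simp
  -- reduction of h⁻¹
  have hinvred : ((h⁻¹ : GL (Fin 2) ℤ_[p]) : Matrix (Fin 2) (Fin 2) ℤ_[p]).map
      (PadicInt.toZMod : ℤ_[p] →+* ZMod p) =
      (((lbar⁻¹ : (ZMod p)ˣ) : ZMod p) • (1 : Matrix (Fin 2) (Fin 2) (ZMod p))) := by
    set F : Matrix (Fin 2) (Fin 2) ℤ_[p] →+* Matrix (Fin 2) (Fin 2) (ZMod p) :=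
        (PadicInt.toZMod : ℤ_[p] →+* ZMod p).mapMatrix with hF
    have hFh : F ((h : GL (Fin 2) ℤ_[p]) : Matrix (Fin 2) (Fin 2) ℤ_[p]) =
        (lbar : ZMod p) • 1 := hred
    have hmul : ((h : GL (Fin 2) ℤ_[p]) : Matrix (Fin 2) (Fin 2) ℤ_[p]) *
        ((h⁻¹ : GL (Fin 2) ℤ_[p]) : Matrix (Fin 2) (Fin 2) ℤ_[p]) = 1 := by
      exact Units.mul_inv h
    have h2 : ((lbar : ZMod p) • (1 : Matrix (Fin 2) (Fin 2) (ZMod p))) *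
        F ((h⁻¹ : GL (Fin 2) ℤ_[p]) : Matrix (Fin 2) (Fin 2) ℤ_[p]) = 1 := by
      rw [← hFh, ← map_mul, hmul, map_one]
    calc F ((h⁻¹ : GL (Fin 2) ℤ_[p]) : Matrix (Fin 2) (Fin 2) ℤ_[p])
        = ((((lbar⁻¹ : (ZMod p)ˣ) : ZMod p) • (1 : Matrix (Fin 2) (Fin 2) (ZMod p))) *
          ((lbar : ZMod p) • (1 : Matrix (Fin 2) (Fin 2) (ZMod p)))) *
          F ((h⁻¹ : GL (Fin 2) ℤ_[p]) : Matrix (Fin 2) (Fin 2) ℤ_[p]) := by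
          rw [Matrix.smul_mul, Matrix.mul_smul, smul_smul, Units.inv_mul, one_smul, mul_one,
            one_mul]
      _ = (((lbar⁻¹ : (ZMod p)ˣ) : ZMod p) • (1 : Matrix (Fin 2) (Fin 2) (ZMod p))) := by
          rw [mul_assoc, h2, mul_one]
  have hinvdvd : ∀ i j, (p : ℤ_[p]) ∣
      (((h⁻¹ : GL (Fin 2) ℤ_[p]) : Matrix (Fin 2) (Fin 2) ℤ_[p]) -
        ((u0⁻¹ : ℤ_[p]ˣ) : ℤ_[p]) • 1) i j := by
    have hu0inv : PadicInt.toZMod ((u0⁻¹ : ℤ_[p]ˣ) : ℤ_[p]) = ((lbar⁻¹ : (ZMod p)ˣ) : ZMod p) := by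
      have h1 : PadicInt.toZMod ((u0 : ℤ_[p]) * ((u0⁻¹ : ℤ_[p]ˣ) : ℤ_[p])) = 1 := by
        rw [Units.mul_inv, map_one]
      rw [map_mul, hu0] at h1
      rw [Units.val_inv_eq_inv_val]
      field_simp at h1 ⊢
      rw [mul_comm] at h1
      exact (mul_comm _ _).trans h1
    intro i j
    apply dvd_of_toZMod_eq_zero
    rw [Matrix.sub_apply, map_sub, Matrix.smul_apply, smul_eq_mul, map_mul, hu0inv]
    have hentry : PadicInt.toZMod (((h⁻¹ : GL (Fin 2) ℤ_[p]) : Matrix (Fin 2) (Fin 2) ℤ_[p]) i j) =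
        ((lbar⁻¹ : (ZMod p)ˣ) : ZMod p) * (1 : Matrix (Fin 2) (Fin 2) (ZMod p)) i j := by
      have := congrFun (congrFun hinvred i) j
      rw [Matrix.map_apply] at this
      rw [this, Matrix.smul_apply, smul_eq_mul]
    rw [hentry, Matrix.one_apply, Matrix.one_apply]
    split
    · rw [map_one]; ring
    · rw [map_zero]; ring
  -- compactness: extract a convergent subsequence of the pair of scalar power sequences
  set x : ℕ → ℤ_[p] × ℤ_[p] :=
    fun n => ((u0 : ℤ_[p]) ^ (p ^ n), ((u0⁻¹ : ℤ_[p]ˣ) : ℤ_[p]) ^ (p ^ n)) with hx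
  obtain ⟨⟨b, mu⟩, φ, hφmono, hconv⟩ := CompactSpace.tendsto_subseq x
  have hb : Tendsto (fun k => (u0 : ℤ_[p]) ^ (p ^ (φ k))) atTop (𝓝 b) :=
    (continuous_fst.tendsto _).comp hconv
  have hmu : Tendsto (fun k => ((u0⁻¹ : ℤ_[p]ˣ) : ℤ_[p]) ^ (p ^ (φ k))) atTop (𝓝 mu) :=
    (continuous_snd.tendsto _).comp hconv
  have hbmu : b * mu = 1 := by
    have h1 : Tendsto (fun k => (u0 : ℤ_[p]) ^ (p ^ (φ k)) *
        ((u0⁻¹ : ℤ_[p]ˣ) : ℤ_[p]) ^ (p ^ (φ k))) atTop (𝓝 (b * mu)) := hb.mul hmu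
    have h2 : ∀ k, (u0 : ℤ_[p]) ^ (p ^ (φ k)) * ((u0⁻¹ : ℤ_[p]ˣ) : ℤ_[p]) ^ (p ^ (φ k)) = 1 := by
      intro k
      rw [← mul_pow, Units.mul_inv, one_pow]
    rw [funext h2] at h1
    exact tendsto_nhds_unique h1 tendsto_const_nhds
  set lam : ℤ_[p]ˣ := ⟨b, mu, hbmu, by rw [mul_comm]; exact hbmu⟩ with hlam
  -- b reduces to lbar
  have hbred : PadicInt.toZMod b = (lbar : ZMod p) := by
    rw [Metric.tendsto_atTop] at hb
    obtain ⟨N, hN⟩ := hb 1 one_pos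
    have hd := hN N le_rfl
    rw [dist_eq_norm] at hd
    have hdvd : (p : ℤ_[p]) ∣ ((u0 : ℤ_[p]) ^ (p ^ (φ N)) - b) :=
      (PadicInt.norm_lt_one_iff_dvd _).1 hd
    have h0 := toZMod_eq_zero_of_dvd _ hdvd
    rw [map_sub, sub_eq_zero] at h0
    rw [← h0, map_pow, hu0, ZMod.pow_card_pow]
  -- limits of matrix powers
  have hφtop : Tendsto φ atTop atTop := hφmono.tendsto_atTop
  have hmat := tendsto_pow_matrix ((h : GL (Fin 2) ℤ_[p]) : Matrix (Fin 2) (Fin 2) ℤ_[p])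
    u0 hMdvd b φ hφtop hb
  have hmatinv := tendsto_pow_matrix ((h⁻¹ : GL (Fin 2) ℤ_[p]) : Matrix (Fin 2) (Fin 2) ℤ_[p])
    u0⁻¹ hinvdvd mu φ hφtop hmu
  -- the limiting element of GL
  have hgmul : (b • (1 : Matrix (Fin 2) (Fin 2) ℤ_[p])) * (mu • 1) = 1 := by
    rw [Matrix.smul_mul, Matrix.mul_smul, smul_smul, one_mul, hbmu, one_smul]
  have hgmul' : (mu • (1 : Matrix (Fin 2) (Fin 2) ℤ_[p])) * (b • 1) = 1 := by
    rw [Matrix.smul_mul, Matrix.mul_smul, smul_smul, one_mul, mul_comm, hbmu, one_smul]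
  set g : GL (Fin 2) ℤ_[p] := ⟨b • 1, mu • 1, hgmul, hgmul'⟩ with hg
  -- convergence in GL
  have htendsto : Tendsto (fun k => h ^ (p ^ (φ k))) atTop (𝓝 g) := by
    rw [Units.isInducing_embedProduct.tendsto_nhds_iff]
    have hval : Tendsto (fun k => ((h ^ (p ^ (φ k)) : GL (Fin 2) ℤ_[p]) :
        Matrix (Fin 2) (Fin 2) ℤ_[p])) atTop (𝓝 (b • 1)) := by
      have : ∀ k, ((h ^ (p ^ (φ k)) : GL (Fin 2) ℤ_[p]) : Matrix (Fin 2) (Fin 2) ℤ_[p]) =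
          ((h : GL (Fin 2) ℤ_[p]) : Matrix (Fin 2) (Fin 2) ℤ_[p]) ^ (p ^ (φ k)) := by
        intro k; rw [Units.val_pow_eq_pow_val]
      rw [funext this]
      exact hmat
    have hinv : Tendsto (fun k => (((h ^ (p ^ (φ k)) : GL (Fin 2) ℤ_[p])⁻¹ :
        GL (Fin 2) ℤ_[p]) : Matrix (Fin 2) (Fin 2) ℤ_[p])) atTop (𝓝 (mu • 1)) := by
      have : ∀ k, (((h ^ (p ^ (φ k)) : GL (Fin 2) ℤ_[p])⁻¹ : GL (Fin 2) ℤ_[p]) :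
          Matrix (Fin 2) (Fin 2) ℤ_[p]) =
          ((h⁻¹ : GL (Fin 2) ℤ_[p]) : Matrix (Fin 2) (Fin 2) ℤ_[p]) ^ (p ^ (φ k)) := by
        intro k; rw [← inv_pow, Units.val_pow_eq_pow_val]
      rw [funext this]
      exact hmatinv
    exact hval.prodMk_nhds (MulOpposite.continuous_op.tendsto _ |>.comp hinv)
  have hgH : g ∈ H := by
    have hmemall : ∀ k, h ^ (p ^ (φ k)) ∈ H := fun k => pow_mem hmem _
    exact hH.mem_of_tendsto htendsto (Eventually.of_forall hmemall)
  exact ⟨lam, hbred, g, hgH, rfl⟩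
end

section
/- Let ℓ be a prime, d ≥ 0 an integer, H a closed subgroup of GL₂(ℤ_ℓ), and A = ℤ_ℓ[H] the ℤ_ℓ-subalgebra of Mat₂(ℤ_ℓ) generated by H. Let V ⊆ ℤ_ℓ² be an A-submodule containing a vector of ℓ-adic valuation at most d. If H contains all matrices congruent to the identity modulo ℓ^n for some n ≥ 1, then V contains ℓ^{d+n}·ℤ_ℓ². -/
lemma padic_dvd_pow_of_not_pow_dvd {p : ℕ} [Fact p.Prime] {d : ℕ} {x : ℤ_[p]}
    (hx : ¬ ((p : ℤ_[p]) ^ (d + 1) ∣ x)) : x ∣ (p : ℤ_[p]) ^ d := by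
  have hx0 : x ≠ 0 := by rintro rfl; exact hx (dvd_zero _)
  have hspec := PadicInt.unitCoeff_spec hx0
  generalize hk : x.valuation = k at hspec
  have hkd : k ≤ d := by
    by_contra hkd
    push_neg at hkd
    apply hx
    rw [hspec]
    exact Dvd.dvd.mul_left (pow_dvd_pow _ hkd) _
  have hxdvd : x ∣ (p : ℤ_[p]) ^ k := by
    generalize PadicInt.unitCoeff hx0 = u at hspec
    refine ⟨(u⁻¹ : ℤ_[p]ˣ), ?_⟩
    rw [hspec, mul_comm (u : ℤ_[p]), mul_assoc, Units.mul_inv, mul_one]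
  exact hxdvd.trans (pow_dvd_pow _ hkd)

/-- Let `H ≤ GL₂(ℤ_p)` be closed and `V ⊆ ℤ_p²` a submodule stable under `H` (hence a
module over the algebra `ℤ_p[H]`) containing a vector of valuation at most `d` (i.e. with
some coordinate not divisible by `p^(d+1)`). If `H` contains every matrix congruent to the
identity modulo `p^n` (`n ≥ 1`), then `V ⊇ p^(d+n)·ℤ_p²`. -/
theorem stmt8 (p : ℕ) [Fact p.Prime] (d n : ℕ) (hn : 1 ≤ n)
    (H : Subgroup (GL (Fin 2) ℤ_[p])) (hH : IsClosed (H : Set (GL (Fin 2) ℤ_[p])))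
    (V : Submodule ℤ_[p] (Fin 2 → ℤ_[p]))
    (hV : ∀ h ∈ H, ∀ v ∈ V,
        Matrix.mulVec ((h : GL (Fin 2) ℤ_[p]) : Matrix (Fin 2) (Fin 2) ℤ_[p]) v ∈ V)
    (hvec : ∃ v ∈ V, ∃ i : Fin 2, ¬ ((p : ℤ_[p]) ^ (d + 1) ∣ v i))
    (hfull : ∀ M : GL (Fin 2) ℤ_[p],
        (∀ i j, (p : ℤ_[p]) ^ n ∣
          ((M : Matrix (Fin 2) (Fin 2) ℤ_[p]) i j - (1 : Matrix (Fin 2) (Fin 2) ℤ_[p]) i j))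
        → M ∈ H) :
    ∀ w : Fin 2 → ℤ_[p], ((p : ℤ_[p]) ^ (d + n)) • w ∈ V := by
  obtain ⟨v, hvV, i, hvi⟩ := hvec
  -- Key step: for every matrix M, p^n • (M *ᵥ u) ∈ V for u ∈ V.
  have key : ∀ M : Matrix (Fin 2) (Fin 2) ℤ_[p], ∀ u ∈ V,
      ((p : ℤ_[p]) ^ n) • (M.mulVec u) ∈ V := by
    intro M u hu
    set A : Matrix (Fin 2) (Fin 2) ℤ_[p] := 1 + ((p : ℤ_[p]) ^ n) • M with hA
    have hdet : (p : ℤ_[p]) ∣ A.det - 1 := by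
      have hpn : (p : ℤ_[p]) ∣ (p : ℤ_[p]) ^ n := dvd_pow_self _ (by omega)
      refine hpn.trans ⟨M 0 0 + M 1 1 + (p : ℤ_[p]) ^ n * (M 0 0 * M 1 1 - M 0 1 * M 1 0), ?_⟩
      rw [Matrix.det_fin_two]
      simp only [hA, Matrix.add_apply, Matrix.one_apply, Matrix.smul_apply, smul_eq_mul]
      norm_num
      ring
    have hunit : IsUnit A.det := by
      rw [PadicInt.isUnit_iff]
      rcases lt_or_eq_of_le (PadicInt.norm_le_one A.det) with hlt | heq
      · exfalso
        rw [PadicInt.norm_lt_one_iff_dvd] at hlt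
        have h1 : (p : ℤ_[p]) ∣ 1 := by
          have := dvd_sub hlt hdet
          simpa using this
        exact PadicInt.prime_p.not_unit (isUnit_of_dvd_one h1)
      · exact heq
    have hAu : IsUnit A := (Matrix.isUnit_iff_isUnit_det A).mpr hunit
    have hgH : hAu.unit ∈ H := by
      apply hfull
      intro a b
      rw [hAu.unit_spec]
      simp only [hA, Matrix.add_apply, Matrix.smul_apply, smul_eq_mul, add_sub_cancel_left]
      exact dvd_mul_right _ _
    have h1 : A.mulVec u ∈ V := by
      have := hV hAu.unit hgH u hu
      rwa [hAu.unit_spec] at this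
    have h2 : A.mulVec u = u + ((p : ℤ_[p]) ^ n) • (M.mulVec u) := by
      rw [hA, Matrix.add_mulVec, Matrix.one_mulVec, Matrix.smul_mulVec]
    have h3 := V.sub_mem h1 hu
    rw [h2] at h3
    simpa using h3
  obtain ⟨t, ht⟩ := padic_dvd_pow_of_not_pow_dvd hvi
  intro w
  have mem0 := key (Matrix.single 0 i (t * w 0)) v hvV
  have mem1 := key (Matrix.single 1 i (t * w 1)) v hvV
  have hsum := V.add_mem mem0 mem1
  convert hsum using 1
  rw [Matrix.single_mulVec, Matrix.single_mulVec]
  funext a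
  fin_cases a <;>
    simp [Function.update, Pi.smul_apply, smul_eq_mul, pow_add] <;>
    · rw [ht]; ring
end

section
/- Let ℓ be a prime, d ≥ 0, H a closed subgroup of GL₂(ℤ_ℓ), and A = ℤ_ℓ[H] ⊆ Mat₂(ℤ_ℓ). Let V ⊆ ℤ_ℓ² be an A-submodule containing a vector of valuation at most d. If the reduction of H modulo ℓ acts irreducibly on 𝔽_ℓ², then V contains ℓ^d·ℤ_ℓ². -/
instance instSurjToZMod (p : ℕ) [Fact p.Prime] :
    RingHomSurjective (PadicInt.toZMod : ℤ_[p] →+* ZMod p) :=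
  ⟨fun x => ⟨(x.val : ℤ_[p]), by rw [map_natCast, ZMod.natCast_val, ZMod.cast_id]⟩⟩

open PadicInt in
noncomputable def redMap (p : ℕ) [Fact p.Prime] :
    (Fin 2 → ℤ_[p]) →ₛₗ[(PadicInt.toZMod : ℤ_[p] →+* ZMod p)] (Fin 2 → ZMod p) where
  toFun v := fun i => PadicInt.toZMod (v i)
  map_add' x y := by funext i; simp
  map_smul' c x := by funext i; simp [mul_comm]

theorem base_lemma (p : ℕ) [Fact p.Prime]
    (H : Subgroup (GL (Fin 2) ℤ_[p]))
    (V : Submodule ℤ_[p] (Fin 2 → ℤ_[p]))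
    (hV : ∀ h ∈ H, ∀ v ∈ V,
        Matrix.mulVec ((h : GL (Fin 2) ℤ_[p]) : Matrix (Fin 2) (Fin 2) ℤ_[p]) v ∈ V)
    (hvec : ∃ v ∈ V, ∃ i : Fin 2, ¬ ((p : ℤ_[p]) ∣ v i))
    (hirr : ∀ W : Submodule (ZMod p) (Fin 2 → ZMod p),
        (∀ h ∈ H, ∀ w ∈ W,
          Matrix.mulVec (((h : GL (Fin 2) ℤ_[p]) : Matrix (Fin 2) (Fin 2) ℤ_[p]).map
            (PadicInt.toZMod : ℤ_[p] →+* ZMod p)) w ∈ W) →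
        W = ⊥ ∨ W = ⊤) :
    V = ⊤ := by
  classical
  set f := redMap p with hf
  set W : Submodule (ZMod p) (Fin 2 → ZMod p) := V.map f with hW
  have key : ∀ (M : Matrix (Fin 2) (Fin 2) ℤ_[p]) (x : Fin 2 → ℤ_[p]),
      Matrix.mulVec (M.map PadicInt.toZMod) (f x) = f (Matrix.mulVec M x) := by
    intro M x
    funext j
    simp [hf, redMap, Matrix.mulVec, dotProduct, Fin.sum_univ_two, Matrix.map_apply]
    fin_cases j <;> simp
  have hWstab : ∀ h ∈ H, ∀ w ∈ W,
      Matrix.mulVec (((h : GL (Fin 2) ℤ_[p]) : Matrix (Fin 2) (Fin 2) ℤ_[p]).map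
        (PadicInt.toZMod : ℤ_[p] →+* ZMod p)) w ∈ W := by
    rintro h hh w ⟨x, hx, rfl⟩
    rw [key]
    exact ⟨_, hV h hh x hx, rfl⟩
  have hker : ∀ x : ℤ_[p], PadicInt.toZMod x = 0 ↔ (p : ℤ_[p]) ∣ x := by
    intro x
    rw [← RingHom.mem_ker, PadicInt.ker_toZMod, PadicInt.maximalIdeal_eq_span_p,
      Ideal.mem_span_singleton]
  have hWne : W ≠ ⊥ := by
    obtain ⟨v, hv, i, hvi⟩ := hvec
    intro hb
    have : f v ∈ W := ⟨v, hv, rfl⟩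
    rw [hb, Submodule.mem_bot] at this
    apply hvi
    rw [← hker]
    calc PadicInt.toZMod (v i) = f v i := rfl
    _ = 0 := by rw [this]; rfl
  have hWtop : W = ⊤ := (hirr W hWstab).resolve_left hWne
  -- Nakayama
  have hle : (⊤ : Submodule ℤ_[p] (Fin 2 → ℤ_[p])) ≤
      V ⊔ (IsLocalRing.maximalIdeal ℤ_[p]) • ⊤ := by
    intro x _
    have : f x ∈ W := hWtop ▸ Submodule.mem_top
    obtain ⟨y, hy, hfy⟩ := this
    have hdvd : ∀ j, (p : ℤ_[p]) ∣ (x - y) j := by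
      intro j
      rw [← hker]
      have : PadicInt.toZMod (y j) = PadicInt.toZMod (x j) := congrFun hfy j
      simp [redMap, Pi.sub_apply, map_sub, this]
    choose u hu using hdvd
    have hx : x = y + (p : ℤ_[p]) • u := by
      funext j
      have := hu j
      simp only [Pi.sub_apply] at this
      simp [Pi.smul_apply, smul_eq_mul, ← this]
    rw [hx]
    refine Submodule.add_mem_sup hy ?_
    refine Submodule.smul_mem_smul ?_ Submodule.mem_top
    rw [PadicInt.maximalIdeal_eq_span_p, Ideal.mem_span_singleton]
  have := Submodule.le_of_le_smul_of_le_jacobson_bot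
    (Module.Finite.fg_top (R := ℤ_[p]) (M := Fin 2 → ℤ_[p]))
    (IsLocalRing.maximalIdeal_le_jacobson ⊥) hle
  exact top_le_iff.mp this

/-- Let `H ≤ GL₂(ℤ_p)` be closed and `V ⊆ ℤ_p²` a submodule stable under `H` containing a
vector of valuation at most `d`. If the reduction of `H` modulo `p` acts irreducibly on
`𝔽_p²`, then `V ⊇ p^d·ℤ_p²`. -/
theorem stmt9 (p : ℕ) [Fact p.Prime] (d : ℕ)
    (H : Subgroup (GL (Fin 2) ℤ_[p])) (hH : IsClosed (H : Set (GL (Fin 2) ℤ_[p])))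
    (V : Submodule ℤ_[p] (Fin 2 → ℤ_[p]))
    (hV : ∀ h ∈ H, ∀ v ∈ V,
        Matrix.mulVec ((h : GL (Fin 2) ℤ_[p]) : Matrix (Fin 2) (Fin 2) ℤ_[p]) v ∈ V)
    (hvec : ∃ v ∈ V, ∃ i : Fin 2, ¬ ((p : ℤ_[p]) ^ (d + 1) ∣ v i))
    (hirr : ∀ W : Submodule (ZMod p) (Fin 2 → ZMod p),
        (∀ h ∈ H, ∀ w ∈ W,
          Matrix.mulVec (((h : GL (Fin 2) ℤ_[p]) : Matrix (Fin 2) (Fin 2) ℤ_[p]).map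
            (PadicInt.toZMod : ℤ_[p] →+* ZMod p)) w ∈ W) →
        W = ⊥ ∨ W = ⊤) :
    ∀ w : Fin 2 → ℤ_[p], ((p : ℤ_[p]) ^ d) • w ∈ V := by
  classical
  induction d generalizing V with
  | zero =>
    simp only [pow_zero, one_smul]
    have : V = ⊤ := by
      apply base_lemma p H V hV ?_ hirr
      simpa using hvec
    intro w; rw [this]; exact Submodule.mem_top
  | succ d ih =>
    by_cases hc : ∃ v ∈ V, ∃ i : Fin 2, ¬ ((p : ℤ_[p]) ^ (d + 1) ∣ v i)
    · intro w
      have := ih V hV hc w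
      have h2 : ((p : ℤ_[p]) ^ (d + 1)) • w = (p : ℤ_[p]) • (((p : ℤ_[p]) ^ d) • w) := by
        rw [← smul_assoc, smul_eq_mul, ← pow_succ']
      rw [h2]
      exact V.smul_mem _ this
    · push_neg at hc
      obtain ⟨v, hv, i, hvi⟩ := hvec
      -- V'' = {x | p^(d+1) • x ∈ V}
      set V'' : Submodule ℤ_[p] (Fin 2 → ℤ_[p]) :=
        Submodule.comap (((p : ℤ_[p]) ^ (d + 1)) • (LinearMap.id : (Fin 2 → ℤ_[p]) →ₗ[ℤ_[p]] (Fin 2 → ℤ_[p]))) V with hV''def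
      have hmem : ∀ x, x ∈ V'' ↔ ((p : ℤ_[p]) ^ (d + 1)) • x ∈ V := by
        intro x; rfl
      have hV''stab : ∀ h ∈ H, ∀ x ∈ V'',
          Matrix.mulVec ((h : GL (Fin 2) ℤ_[p]) : Matrix (Fin 2) (Fin 2) ℤ_[p]) x ∈ V'' := by
        intro h hh x hx
        rw [hmem] at hx ⊢
        rw [← Matrix.mulVec_smul]
        exact hV h hh _ hx
      have hdvd : ∀ j, ((p : ℤ_[p]) ^ (d + 1)) ∣ v j := fun j => hc v hv j
      choose u hu using hdvd
      have huV : u ∈ V'' := by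
        rw [hmem]
        have : ((p : ℤ_[p]) ^ (d + 1)) • u = v := by
          funext j; simp [Pi.smul_apply, smul_eq_mul, ← hu j]
        rw [this]; exact hv
      have hui : ¬ ((p : ℤ_[p]) ∣ u i) := by
        intro ⟨c, hcc⟩
        apply hvi
        refine ⟨c, ?_⟩
        rw [hu i, hcc, pow_succ]
        ring
      have : V'' = ⊤ := base_lemma p H V'' hV''stab ⟨u, huV, i, hui⟩ hirr
      intro w
      have hw : w ∈ V'' := this ▸ Submodule.mem_top
      rwa [hmem] at hw
end

section
/- Let ℓ be a prime and suppose that for every n in a cofinal set the image H_{ℓ^n} ⊆ GL₂(ℤ/ℓ^nℤ) of a compatible system of subgroups satisfies: H_{ℓ^{n_ℓ}} ∋ the class of Id + ℓ^{n_ℓ}g for every g ∈ Mat₂(ℤ_ℓ), and ker(H_{ℓ^{n+1}} → H_{ℓ^n}) = {Id + ℓ^n h : h ∈ Mat₂(𝔽_ℓ)} for all n ≥ n_ℓ. Then for every n ≥ n_ℓ and every g ∈ Mat₂(ℤ_ℓ), the reduction of Id + ℓ^{n_ℓ}g modulo ℓ^n lies in H_{ℓ^n}. -/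
section Aux

lemma aux_map_mat {R S : Type*} [CommRing R] [CommRing S] (f : R →+* S) (c : R)
    (A : Matrix (Fin 2) (Fin 2) R) :
    (1 + c • A).map f = 1 + f c • A.map f := by
  ext i j
  simp [Matrix.map_apply, Matrix.add_apply, Matrix.one_apply, apply_ite f,
    smul_eq_mul]

variable {ℓ : ℕ} [Fact ℓ.Prime]

lemma aux_dvd (n : ℕ) (a : ZMod (ℓ ^ (n+1)))
    (h : ZMod.castHom (pow_dvd_pow ℓ (Nat.le_succ n)) (ZMod (ℓ ^ n)) a = 0) :
    ∃ c, a = (ℓ : ZMod (ℓ ^ (n+1))) ^ n * c := by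
  have hp : ℓ.Prime := Fact.out
  haveI : NeZero (ℓ ^ (n+1)) := ⟨pow_ne_zero _ hp.ne_zero⟩
  have hv : ((a.val : ZMod (ℓ ^ n)) : ZMod (ℓ ^ n)) = 0 := by
    rw [ZMod.natCast_val] at *
    simpa [ZMod.castHom_apply] using h
  rw [ZMod.natCast_eq_zero_iff] at hv
  obtain ⟨k, hk⟩ := hv
  refine ⟨(k : ZMod (ℓ ^ (n+1))), ?_⟩
  have : (a.val : ZMod (ℓ ^ (n+1))) = a := by
    simp [ZMod.natCast_val, ZMod.cast_id]
  rw [← this, hk]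
  push_cast
  ring

lemma aux_unit (m : ℕ) (hm : 1 ≤ m) (a : ZMod (ℓ ^ m))
    (h : ZMod.castHom (dvd_pow_self ℓ (Nat.one_le_iff_ne_zero.mp hm)) (ZMod ℓ) a = 1) :
    IsUnit a := by
  have hp : ℓ.Prime := Fact.out
  haveI : NeZero (ℓ ^ m) := ⟨pow_ne_zero _ hp.ne_zero⟩
  have h2 : ((a.val : ℕ) : ZMod ℓ) = 1 := by
    rw [← h, ZMod.castHom_apply, ← ZMod.natCast_val]
  have : ¬ ℓ ∣ a.val := by
    intro hd
    rw [(ZMod.natCast_eq_zero_iff a.val ℓ).mpr hd] at h2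
    exact one_ne_zero h2.symm
  have hc : a.val.Coprime ℓ := ((Nat.Prime.coprime_iff_not_dvd hp).mpr this).symm
  have := (ZMod.isUnit_iff_coprime a.val (ℓ ^ m)).mpr (hc.pow_right m)
  simpa [ZMod.natCast_val, ZMod.cast_id] using this

end Aux

/-- Reduction map `GL₂(ℤ/ℓ^(n+1)) → GL₂(ℤ/ℓ^n)`. -/
noncomputable def glRed (ℓ n : ℕ) :
    GL (Fin 2) (ZMod (ℓ ^ (n + 1))) →* GL (Fin 2) (ZMod (ℓ ^ n)) :=
  Units.map ((ZMod.castHom (pow_dvd_pow ℓ (Nat.le_succ n))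
    (ZMod (ℓ ^ n))).mapMatrix.toMonoidHom)

/-- If a compatible system of subgroups `H (ℓ^n) ⊆ GL₂(ℤ/ℓ^n)` contains (the class of)
`Id + ℓ^nℓ·g` for all `g ∈ Mat₂(ℤ_ℓ)` at level `nℓ`, and has maximal growth
(`ker(H(ℓ^(n+1)) → H(ℓ^n)) = {Id + ℓ^n h}`) for all `n ≥ nℓ`, then for every `n ≥ nℓ` and
every `g ∈ Mat₂(ℤ_ℓ)` the reduction of `Id + ℓ^nℓ·g` mod `ℓ^n` lies in `H (ℓ^n)`. -/
theorem stmt10 (ℓ : ℕ) [Fact ℓ.Prime] (nℓ : ℕ) (hnℓ : 1 ≤ nℓ)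
    (H : ∀ n : ℕ, Subgroup (GL (Fin 2) (ZMod (ℓ ^ n))))
    (hcompat : ∀ n : ℕ, ∀ x ∈ H (n + 1), glRed ℓ n x ∈ H n)
    (hsurj : ∀ n : ℕ, ∀ y ∈ H n, ∃ x ∈ H (n + 1), glRed ℓ n x = y)
    (hbase : ∀ g : Matrix (Fin 2) (Fin 2) ℤ_[ℓ], ∃ x ∈ H nℓ,
        ((x : GL (Fin 2) (ZMod (ℓ ^ nℓ))) : Matrix (Fin 2) (Fin 2) (ZMod (ℓ ^ nℓ))) =
          1 + ((ℓ : ZMod (ℓ ^ nℓ)) ^ nℓ) • g.map (PadicInt.toZModPow nℓ))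
    (hker : ∀ n : ℕ, nℓ ≤ n → ∀ x : GL (Fin 2) (ZMod (ℓ ^ (n + 1))),
        ((x ∈ H (n + 1) ∧ glRed ℓ n x = 1) ↔
          ∀ i j : Fin 2, ∃ c : ZMod (ℓ ^ (n + 1)),
            ((x : Matrix (Fin 2) (Fin 2) (ZMod (ℓ ^ (n + 1)))) i j -
              (1 : Matrix (Fin 2) (Fin 2) (ZMod (ℓ ^ (n + 1)))) i j) =
              (ℓ : ZMod (ℓ ^ (n + 1))) ^ n * c)) :
    ∀ n : ℕ, nℓ ≤ n → ∀ g : Matrix (Fin 2) (Fin 2) ℤ_[ℓ], ∃ x ∈ H n,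
      ((x : GL (Fin 2) (ZMod (ℓ ^ n))) : Matrix (Fin 2) (Fin 2) (ZMod (ℓ ^ n))) =
        1 + ((ℓ : ZMod (ℓ ^ n)) ^ nℓ) • g.map (PadicInt.toZModPow n) := by
  intro n hn
  induction n, hn using Nat.le_induction with
  | base => exact hbase
  | succ n hn ih =>
    intro g
    obtain ⟨x, hxH, hx⟩ := ih g
    obtain ⟨y, hyH, hy⟩ := hsurj n x hxH
    set f : ZMod (ℓ ^ (n+1)) →+* ZMod (ℓ ^ n) :=
      ZMod.castHom (pow_dvd_pow ℓ (Nat.le_succ n)) (ZMod (ℓ ^ n)) with hf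
    set M : Matrix (Fin 2) (Fin 2) (ZMod (ℓ ^ (n+1))) :=
      1 + ((ℓ : ZMod (ℓ ^ (n+1))) ^ nℓ) • g.map (PadicInt.toZModPow (n+1)) with hM
    -- key: M.map f is the matrix of x
    have hcomp : f.comp (PadicInt.toZModPow (n+1)) = PadicInt.toZModPow n := by
      rw [hf]; exact PadicInt.zmod_cast_comp_toZModPow n (n+1) (Nat.le_succ n)
    have hmapM : M.map f = (x : Matrix (Fin 2) (Fin 2) (ZMod (ℓ ^ n))) := by
      rw [hM, aux_map_mat, hx]
      have h1 : f ((ℓ : ZMod (ℓ ^ (n+1))) ^ nℓ) = (ℓ : ZMod (ℓ ^ n)) ^ nℓ := by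
        rw [map_pow, map_natCast]
      have h2 : (g.map (PadicInt.toZModPow (n+1))).map f
          = g.map (PadicInt.toZModPow n) := by
        rw [Matrix.map_map, ← RingHom.coe_comp, hcomp]
      rw [h1, h2]
    -- M is invertible
    have hMunit : IsUnit M := by
      rw [Matrix.isUnit_iff_isUnit_det]
      apply aux_unit (n+1) (Nat.succ_le_succ (Nat.zero_le n))
      have : (ZMod.castHom (dvd_pow_self ℓ (n.succ_ne_zero))
          (ZMod ℓ)) M.det = (M.map (ZMod.castHom (dvd_pow_self ℓ (n.succ_ne_zero))
          (ZMod ℓ))).det := (RingHom.map_det _ M).trans rfl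
      rw [this, hM, aux_map_mat]
      have hz : (ZMod.castHom (dvd_pow_self ℓ (n.succ_ne_zero)) (ZMod ℓ))
          ((ℓ : ZMod (ℓ ^ (n+1))) ^ nℓ) = 0 := by
        rw [map_pow, map_natCast, ZMod.natCast_self, zero_pow (Nat.one_le_iff_ne_zero.mp hnℓ)]
      rw [hz, zero_smul, add_zero, Matrix.det_one]
    set u : GL (Fin 2) (ZMod (ℓ ^ (n+1))) := hMunit.unit with hu
    have huval : (u : Matrix (Fin 2) (Fin 2) (ZMod (ℓ ^ (n+1)))) = M := hMunit.unit_spec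
    have hredu : glRed ℓ n u = x := by
      apply Units.ext
      show f.mapMatrix (u : Matrix (Fin 2) (Fin 2) (ZMod (ℓ ^ (n+1)))) = _
      rw [RingHom.mapMatrix_apply, huval, hmapM]
    set k : GL (Fin 2) (ZMod (ℓ ^ (n+1))) := u * y⁻¹ with hk
    have hredk : glRed ℓ n k = 1 := by
      rw [hk, map_mul, map_inv, hredu, hy, mul_inv_cancel]
    have hkmem : k ∈ H (n+1) := by
      have := (hker n hn k).mpr ?_
      · exact this.1
      intro i j
      -- (k - 1) i j = ((M - y) * y⁻¹) i j
      have hyy : (y : Matrix (Fin 2) (Fin 2) (ZMod (ℓ ^ (n+1)))) *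
          ((y⁻¹ : GL (Fin 2) (ZMod (ℓ ^ (n+1)))) : Matrix (Fin 2) (Fin 2) (ZMod (ℓ ^ (n+1)))) = 1 := by
        simpa [Units.val_mul] using congrArg Units.val (mul_inv_cancel y)
      have hkval : (k : Matrix (Fin 2) (Fin 2) (ZMod (ℓ ^ (n+1)))) =
          M * ((y⁻¹ : GL (Fin 2) (ZMod (ℓ ^ (n+1)))) : Matrix (Fin 2) (Fin 2) (ZMod (ℓ ^ (n+1)))) := by
        have h3 : (k : Matrix (Fin 2) (Fin 2) (ZMod (ℓ ^ (n+1)))) =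
            (u : Matrix (Fin 2) (Fin 2) (ZMod (ℓ ^ (n+1)))) *
            ((y⁻¹ : GL (Fin 2) (ZMod (ℓ ^ (n+1)))) : Matrix (Fin 2) (Fin 2) (ZMod (ℓ ^ (n+1)))) := by
          rw [hk, Units.val_mul]
        rw [h3, huval]
      have heq : (k : Matrix (Fin 2) (Fin 2) (ZMod (ℓ ^ (n+1)))) -
          (1 : Matrix (Fin 2) (Fin 2) (ZMod (ℓ ^ (n+1)))) =
          (M - (y : Matrix (Fin 2) (Fin 2) (ZMod (ℓ ^ (n+1))))) *
          ((y⁻¹ : GL (Fin 2) (ZMod (ℓ ^ (n+1)))) : Matrix (Fin 2) (Fin 2) (ZMod (ℓ ^ (n+1)))) := by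
        rw [hkval, Matrix.sub_mul, hyy]
      -- each entry of M - y is divisible by ℓ^n
      have hdvd : ∀ i j : Fin 2, ∃ c, (M - (y : Matrix (Fin 2) (Fin 2) (ZMod (ℓ ^ (n+1))))) i j
          = (ℓ : ZMod (ℓ ^ (n+1))) ^ n * c := by
        intro i j
        apply aux_dvd
        have : f.mapMatrix ((y : Matrix (Fin 2) (Fin 2) (ZMod (ℓ ^ (n+1))))) =
            (x : Matrix (Fin 2) (Fin 2) (ZMod (ℓ ^ n))) := by
          rw [← hy]; rfl
        have hyf : ((y : Matrix (Fin 2) (Fin 2) (ZMod (ℓ ^ (n+1))))).map f =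
            (x : Matrix (Fin 2) (Fin 2) (ZMod (ℓ ^ n))) := this
        have h4 : f (M i j) = f ((y : Matrix (Fin 2) (Fin 2) (ZMod (ℓ ^ (n+1)))) i j) := by
          have := congrFun (congrFun (hmapM.trans hyf.symm) i) j
          simpa only [Matrix.map_apply] using this
        rw [Matrix.sub_apply]
        show f _ = 0
        rw [map_sub, h4, sub_self]
      obtain ⟨c₀, hc₀⟩ := hdvd i 0
      obtain ⟨c₁, hc₁⟩ := hdvd i 1
      refine ⟨c₀ * ((y⁻¹ : GL (Fin 2) (ZMod (ℓ ^ (n+1)))) : Matrix (Fin 2) (Fin 2) (ZMod (ℓ ^ (n+1)))) 0 j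
        + c₁ * ((y⁻¹ : GL (Fin 2) (ZMod (ℓ ^ (n+1)))) : Matrix (Fin 2) (Fin 2) (ZMod (ℓ ^ (n+1)))) 1 j, ?_⟩
      have h5 := congrFun (congrFun heq i) j
      rw [Matrix.sub_apply] at h5
      rw [h5, Matrix.mul_apply, Fin.sum_univ_two, hc₀, hc₁]
      ring
    have humem : u ∈ H (n+1) := by
      have : u = k * y := by rw [hk, inv_mul_cancel_right]
      rw [this]; exact (H (n+1)).mul_mem hkmem hyH
    exact ⟨u, humem, huval⟩
end
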